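/- For every d ≥ 1 and every M ∈ SL(d+1,ℝ), the number of distinct values taken by F(M,t) as t ranges over (0,1) is at most 2^d + 1; that is, #{ F(M,t) : t ∈ (0,1) } ≤ 2^d + 1. -/

import Mathlib

open Matrix Set

/-- The point of the lattice `ℤ^{d+1} M` corresponding to the integer row vector `w`
(row vectors acting on the right). -/
noncomputable def latPoint {d : ℕ} (M : Matrix (Fin (d + 1)) (Fin (d + 1)) ℝ)
    (w : Fin (d + 1) → ℤ) : Fin (d + 1) → ℝ :=
  (fun i => (w i : ℝ)) ᵥ* M

/-- For a point `x = (u, v) ∈ ℝ^{d+1}`, `vpart x = v ∈ ℝ^d` is the vector of the last `d`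
coordinates (the first coordinate `x 0` being `u`). -/
def vpart {d : ℕ} (x : Fin (d + 1) → ℝ) : Fin d → ℝ := fun i => x i.succ

/-- The set `S(M, t) = { ‖v‖_∞ : (u, v) ∈ ℤ^{d+1} M, ‖v‖_∞ > 0, −t < u < 1 − t }`.
(The norm on `Fin d → ℝ` is the maximum norm.) -/
noncomputable def FSet (d : ℕ) (M : Matrix (Fin (d + 1)) (Fin (d + 1)) ℝ) (t : ℝ) :
    Set ℝ :=
  { r : ℝ | ∃ w : Fin (d + 1) → ℤ, r = ‖vpart (latPoint M w)‖ ∧ 0 < r ∧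
      -t < latPoint M w 0 ∧ latPoint M w 0 < 1 - t }

/-- `F(M, t) = min S(M, t)`. -/
noncomputable def Fval (d : ℕ) (M : Matrix (Fin (d + 1)) (Fin (d + 1)) ℝ) (t : ℝ) : ℝ :=
  sInf (FSet d M t)

namespace FvalAux

variable {d : ℕ} (M : Matrix (Fin (d + 1)) (Fin (d + 1)) ℝ)

lemma latPoint_add (v w : Fin (d + 1) → ℤ) :
    latPoint M (v + w) = latPoint M v + latPoint M w := by
  unfold latPoint
  have h : (fun i => ((v + w) i : ℝ)) = (fun i => (v i : ℝ)) + fun i => (w i : ℝ) := by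
    funext i; simp
  rw [h, Matrix.add_vecMul]

lemma latPoint_neg (w : Fin (d + 1) → ℤ) : latPoint M (-w) = -latPoint M w := by
  unfold latPoint
  have h : (fun i => ((-w) i : ℝ)) = -fun i => (w i : ℝ) := by
    funext i; simp
  rw [h, Matrix.neg_vecMul]

lemma latPoint_sub (v w : Fin (d + 1) → ℤ) :
    latPoint M (v - w) = latPoint M v - latPoint M w := by
  have h : v - w = v + (-w) := by ring
  rw [h, latPoint_add, latPoint_neg, sub_eq_add_neg]

lemma latPoint_zero : latPoint M (0 : Fin (d + 1) → ℤ) = 0 := by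
  unfold latPoint
  rw [show (fun i => ((0 : Fin (d + 1) → ℤ) i : ℝ)) = (0 : Fin (d + 1) → ℝ) by
    funext i; simp]
  exact Matrix.zero_vecMul M

lemma vpart_sub (x y : Fin (d + 1) → ℝ) : vpart (x - y) = vpart x - vpart y := rfl

lemma vpart_add (x y : Fin (d + 1) → ℝ) : vpart (x + y) = vpart x + vpart y := rfl

lemma vpart_neg (x : Fin (d + 1) → ℝ) : vpart (-x) = -vpart x := rfl

variable {M}

lemma isUnit_det (hM : M.det = 1) : IsUnit M.det := by rw [hM]; exact isUnit_one

lemma castVec_eq (hM : M.det = 1) (w : Fin (d + 1) → ℤ) :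
    (fun i => (w i : ℝ)) = latPoint M w ᵥ* M⁻¹ := by
  unfold latPoint
  rw [Matrix.vecMul_vecMul, Matrix.mul_nonsing_inv _ (isUnit_det hM), Matrix.vecMul_one]

lemma latPoint_eq_zero (hM : M.det = 1) {w : Fin (d + 1) → ℤ}
    (h : latPoint M w = 0) : w = 0 := by
  have h2 := castVec_eq hM w
  rw [h, Matrix.zero_vecMul] at h2
  funext i
  have h3 := congrFun h2 i
  rw [Pi.zero_apply] at h3
  show w i = 0
  exact_mod_cast h3

lemma mem_FSet {t : ℝ} {w : Fin (d + 1) → ℤ} (hv : vpart (latPoint M w) ≠ 0)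
    (h1 : -t < latPoint M w 0) (h2 : latPoint M w 0 < 1 - t) :
    ‖vpart (latPoint M w)‖ ∈ FSet d M t :=
  ⟨w, rfl, norm_pos_iff.2 hv, h1, h2⟩

lemma FSet_bddBelow (t : ℝ) : BddBelow (FSet d M t) := by
  refine ⟨0, ?_⟩
  rintro x ⟨w, rfl, hpos, -, -⟩
  exact hpos.le

lemma Fval_le {t : ℝ} {x : ℝ} (hx : x ∈ FSet d M t) : Fval d M t ≤ x :=
  csInf_le (FSet_bddBelow t) hx

/-- Principle (P): a lattice point with small nonzero `v`-part is outside the window. -/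
lemma notin_window {t : ℝ} {w : Fin (d + 1) → ℤ}
    (hv : vpart (latPoint M w) ≠ 0) (hlt : ‖vpart (latPoint M w)‖ < Fval d M t) :
    latPoint M w 0 ≤ -t ∨ 1 - t ≤ latPoint M w 0 := by
  by_contra h
  push_neg at h
  exact absurd (Fval_le (mem_FSet hv h.1 h.2)) (not_le.2 hlt)

/-- Principle (P'): a lattice point with small nonzero `v`-part is far from the window. -/
lemma far {t : ℝ} (ht0 : 0 < t) (ht1 : t < 1) {w : Fin (d + 1) → ℤ}
    (hv : vpart (latPoint M w) ≠ 0) (hlt : ‖vpart (latPoint M w)‖ < Fval d M t) :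
    max t (1 - t) ≤ |latPoint M w 0| := by
  have h1 := notin_window hv hlt
  have hv2 : vpart (latPoint M (-w)) ≠ 0 := by
    rw [latPoint_neg, vpart_neg]
    exact neg_ne_zero.2 hv
  have hlt2 : ‖vpart (latPoint M (-w))‖ < Fval d M t := by
    rw [latPoint_neg, vpart_neg, norm_neg]; exact hlt
  have h2 := notin_window hv2 hlt2
  rw [latPoint_neg] at h2
  have h2' : -latPoint M w 0 ≤ -t ∨ 1 - t ≤ -latPoint M w 0 := by
    simpa using h2
  set u := latPoint M w 0 with hu
  rcases h1 with ha | hb <;> rcases h2' with hc | hd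
  · exfalso; linarith
  · have hun : u ≤ 0 := by linarith
    rw [abs_of_nonpos hun]
    exact max_le (by linarith) (by linarith)
  · have hup : 0 ≤ u := by linarith
    rw [abs_of_nonneg hup]
    exact max_le (by linarith) (by linarith)
  · exfalso; linarith

/-- The infimum of a nonempty `FSet` is attained. -/
lemma Fval_mem (hM : M.det = 1) {t : ℝ} (ht0 : 0 < t) (ht1 : t < 1)
    (hne : (FSet d M t).Nonempty) : Fval d M t ∈ FSet d M t := by
  classical
  obtain ⟨r₀, hr₀⟩ := hne
  set B : ℝ := max r₀ 1 with hB
  have hB1 : (1 : ℝ) ≤ B := le_max_right _ _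
  have hB0 : (0 : ℝ) ≤ B := by linarith
  set S : ℝ := ∑ j, ∑ i, |M⁻¹ j i| with hS
  have hSnn : 0 ≤ S := Finset.sum_nonneg fun j _ =>
    Finset.sum_nonneg fun i _ => abs_nonneg _
  set K : ℝ := B * S with hK
  set N : ℤ := ⌈K⌉ with hN
  set A : Set ℝ := {x | x ∈ FSet d M t ∧ x ≤ r₀} with hA
  set W : Set (Fin (d + 1) → ℤ) := {w | ∀ i, w i ∈ Set.Icc (-N) N} with hW
  have hWfin : W.Finite := Set.Finite.pi' fun i => Set.finite_Icc _ _
  have hAsub : A ⊆ (fun w => ‖vpart (latPoint M w)‖) '' W := by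
    rintro x ⟨⟨w, rfl, hxpos, hw1, hw2⟩, hxle⟩
    refine ⟨w, ?_, rfl⟩
    have hbound : ∀ j, |latPoint M w j| ≤ B := by
      intro j
      refine Fin.cases ?_ ?_ j
      · have : |latPoint M w 0| ≤ 1 := by
          rw [abs_le]; constructor <;> linarith
        linarith
      · intro j
        have h1 : |latPoint M w j.succ| = ‖vpart (latPoint M w) j‖ := by
          rw [Real.norm_eq_abs]; rfl
        rw [h1]
        calc ‖vpart (latPoint M w) j‖ ≤ ‖vpart (latPoint M w)‖ := norm_le_pi_norm _ j
          _ ≤ r₀ := hxle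
          _ ≤ B := le_max_left _ _
    intro i
    have hwi : (w i : ℝ) = ∑ j, latPoint M w j * M⁻¹ j i := by
      have h := congrFun (castVec_eq hM w) i
      rw [h]
      simp [Matrix.vecMul, dotProduct]
    have habs : |(w i : ℝ)| ≤ K := by
      rw [hwi]
      calc |∑ j, latPoint M w j * M⁻¹ j i| ≤ ∑ j, |latPoint M w j * M⁻¹ j i| :=
            Finset.abs_sum_le_sum_abs _ _
        _ ≤ ∑ j, B * |M⁻¹ j i| := by
            refine Finset.sum_le_sum fun j _ => ?_
            rw [abs_mul]
            exact mul_le_mul_of_nonneg_right (hbound j) (abs_nonneg _)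
        _ = B * ∑ j, |M⁻¹ j i| := by rw [Finset.mul_sum]
        _ ≤ B * S := by
            refine mul_le_mul_of_nonneg_left ?_ hB0
            refine Finset.sum_le_sum fun j _ => ?_
            exact Finset.single_le_sum (f := fun i' => |M⁻¹ j i'|)
              (fun i' _ => abs_nonneg _) (Finset.mem_univ i)
    have hKN : K ≤ (N : ℝ) := Int.le_ceil K
    have habs' : |(w i : ℝ)| ≤ (N : ℝ) := habs.trans hKN
    rw [abs_le] at habs'
    constructor
    · exact_mod_cast habs'.1
    · exact_mod_cast habs'.2
  have hAfin : A.Finite := (hWfin.image _).subset hAsub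
  have hAne : A.Nonempty := ⟨r₀, hr₀, le_rfl⟩
  obtain ⟨m, hmA, hmmin⟩ := Set.exists_min_image A id hAfin hAne
  have heq : Fval d M t = m := by
    refine le_antisymm (csInf_le (FSet_bddBelow t) hmA.1) ?_
    refine le_csInf ⟨r₀, hr₀⟩ fun x hx => ?_
    rcases le_or_gt x r₀ with h | h
    · exact hmmin x ⟨hx, h⟩
    · exact (hmA.2).trans h.le
  rw [heq]
  exact hmA.1

/-- `FSet` is nonempty for every `t ∈ (0,1)`. -/
lemma FSet_nonempty (hM : M.det = 1) (hd : 1 ≤ d) {t : ℝ} (ht0 : 0 < t) (ht1 : t < 1) :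
    (FSet d M t).Nonempty := by
  classical
  set ψ : (Fin (d + 1) → ℤ) →+ ℝ :=
    { toFun := fun w => latPoint M w 0
      map_zero' := by show latPoint M 0 0 = 0; rw [latPoint_zero]; rfl
      map_add' := fun v w => by
        show latPoint M (v + w) 0 = latPoint M v 0 + latPoint M w 0
        rw [latPoint_add]; rfl } with hψ
  set S0 : ℝ := ∑ i, |M⁻¹ 0 i| with hS0
  have hS0nn : 0 ≤ S0 := Finset.sum_nonneg fun i _ => abs_nonneg _
  set δ : ℝ := 1 / (S0 + 1) with hδdef
  have hδ : 0 < δ := by positivity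
  have hsmall : ∀ w : Fin (d + 1) → ℤ, vpart (latPoint M w) = 0 →
      |latPoint M w 0| < δ → w = 0 := by
    intro w hv hu
    have hlp : latPoint M w = Pi.single 0 (latPoint M w 0) := by
      funext j
      refine Fin.cases ?_ ?_ j
      · rw [Pi.single_eq_same]
      · intro j
        rw [Pi.single_eq_of_ne (Fin.succ_ne_zero j)]
        exact congrFun hv j
    have hwi : ∀ i, (w i : ℝ) = latPoint M w 0 * M⁻¹ 0 i := by
      intro i
      have h := congrFun (castVec_eq hM w) i
      rw [h]
      conv_lhs => rw [hlp]
      rw [Matrix.single_vecMul]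
      rfl
    funext i
    have hlt1 : |(w i : ℝ)| < 1 := by
      rw [hwi i, abs_mul]
      have h1 : |M⁻¹ 0 i| ≤ S0 :=
        Finset.single_le_sum (f := fun i' => |M⁻¹ 0 i'|)
          (fun i' _ => abs_nonneg _) (Finset.mem_univ i)
      have h2 : |latPoint M w 0| * |M⁻¹ 0 i| ≤ |latPoint M w 0| * S0 :=
        mul_le_mul_of_nonneg_left h1 (abs_nonneg _)
      have e2 : |latPoint M w 0| * S0 ≤ δ * S0 :=
        mul_le_mul_of_nonneg_right hu.le hS0nn
      have e3 : δ * S0 < δ * (S0 + 1) := by nlinarith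
      have h4 : δ * (S0 + 1) = 1 := by
        rw [hδdef]; field_simp
      linarith
    have : -1 < (w i : ℝ) ∧ (w i : ℝ) < 1 := abs_lt.mp hlt1
    have h5 : -1 < w i ∧ w i < 1 := by exact_mod_cast this
    have : w i = 0 := by omega
    simpa using this
  rcases AddSubgroup.dense_or_cyclic ψ.range with hdense | ⟨a, ha⟩
  · -- dense case
    set s' : ℝ := min (min t (1 - t)) δ with hs'def
    have hs' : 0 < s' := lt_min (lt_min ht0 (by linarith)) hδ
    have hne : (Set.Ioo (0 : ℝ) s').Nonempty := ⟨s' / 2, by constructor <;> linarith⟩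
    obtain ⟨x, hxS, hx⟩ := hdense.exists_mem_open isOpen_Ioo hne
    obtain ⟨w, hw⟩ := hxS
    have hu : latPoint M w 0 = x := hw
    have hv : vpart (latPoint M w) ≠ 0 := by
      intro h
      have hz := hsmall w h (by
        rw [hu, abs_of_pos hx.1]
        exact hx.2.trans_le (min_le_right _ _))
      rw [hz] at hu
      rw [latPoint_zero] at hu
      simp at hu
      rw [← hu] at hx
      exact lt_irrefl _ hx.1
    refine ⟨_, mem_FSet hv ?_ ?_⟩
    · rw [hu]; linarith [hx.1]
    · rw [hu]
      have : x < 1 - t := lt_of_lt_of_le hx.2 ((min_le_left _ _).trans (min_le_right _ _))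
      exact this
  · -- cyclic case
    have key : ∃ w : Fin (d + 1) → ℤ, w ≠ 0 ∧ latPoint M w 0 = 0 := by
      set i1 : Fin (d + 1) := ⟨1, by omega⟩ with hi1def
      have hi1 : i1 ≠ 0 := by
        intro h
        have := congrArg Fin.val h
        simp [hi1def] at this
      have hm0 : ψ (Pi.single 0 1) ∈ AddSubgroup.closure {a} := by
        rw [← ha]; exact AddMonoidHom.mem_range.2 ⟨_, rfl⟩
      have hm1 : ψ (Pi.single i1 1) ∈ AddSubgroup.closure {a} := by
        rw [← ha]; exact AddMonoidHom.mem_range.2 ⟨_, rfl⟩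
      obtain ⟨n0, hn0⟩ := AddSubgroup.mem_closure_singleton.1 hm0
      obtain ⟨n1, hn1⟩ := AddSubgroup.mem_closure_singleton.1 hm1
      by_cases h0 : n0 = 0
      · refine ⟨Pi.single 0 1, ?_, ?_⟩
        · intro h
          have := congrFun h 0
          simp at this
        · show ψ (Pi.single 0 1) = 0
          rw [← hn0, h0, zero_smul]
      · refine ⟨n1 • Pi.single 0 1 - n0 • Pi.single i1 1, ?_, ?_⟩
        · intro h
          have := congrFun h i1
          simp [Pi.single_eq_of_ne hi1, Pi.single_eq_same] at this
          exact h0 this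
        · show ψ (n1 • Pi.single 0 1 - n0 • Pi.single i1 1) = 0
          rw [map_sub, map_zsmul, map_zsmul, ← hn0, ← hn1, smul_smul, smul_smul,
            mul_comm, sub_self]
    obtain ⟨w, hw0, hwu⟩ := key
    have hv : vpart (latPoint M w) ≠ 0 := by
      intro h
      apply hw0
      apply latPoint_eq_zero hM
      funext j
      refine Fin.cases ?_ ?_ j
      · simpa using hwu
      · intro j
        exact congrFun h j
    refine ⟨_, mem_FSet hv ?_ ?_⟩
    · rw [hwu]; linarith
    · rw [hwu]; linarith

/-- Coordinatewise: if `a * b ≥ 0` then `|a - b| ≤ max |a| |b|`. -/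
lemma abs_sub_le_max {a b : ℝ} (h : 0 ≤ a * b) : |a - b| ≤ max |a| |b| := by
  rw [abs_sub_le_iff]
  constructor
  · rcases le_or_gt 0 b with hb | hb
    · calc a - b ≤ a := by linarith
        _ ≤ |a| := le_abs_self a
        _ ≤ max |a| |b| := le_max_left _ _
    · have hba : a ≤ 0 := by nlinarith
      calc a - b ≤ -b := by linarith
        _ ≤ |b| := neg_le_abs b
        _ ≤ max |a| |b| := le_max_right _ _
  · rcases le_or_gt 0 a with hA | hA
    · have hb0 : 0 ≤ b ∨ b ≤ 0 := le_total 0 b |>.imp id id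
      rcases le_or_gt 0 b with hb | hb
      · calc b - a ≤ b := by linarith
          _ ≤ |b| := le_abs_self b
          _ ≤ max |a| |b| := le_max_right _ _
      · calc b - a ≤ -a := by linarith
          _ ≤ |a| := neg_le_abs a
          _ ≤ max |a| |b| := le_max_left _ _
    · have hb : b ≤ 0 := by nlinarith
      calc b - a ≤ -a := by linarith
        _ ≤ |a| := neg_le_abs a
        _ ≤ max |a| |b| := le_max_left _ _

lemma norm_sub_le_max {n : ℕ} {y y' : Fin n → ℝ} (h : ∀ l, 0 ≤ y l * y' l) :
    ‖y - y'‖ ≤ max ‖y‖ ‖y'‖ := by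
  have h0 : 0 ≤ max ‖y‖ ‖y'‖ := le_max_of_le_left (norm_nonneg _)
  rw [pi_norm_le_iff_of_nonneg h0]
  intro l
  have h1 : |y l| ≤ ‖y‖ := by
    have := norm_le_pi_norm y l
    rwa [Real.norm_eq_abs] at this
  have h2 : |y' l| ≤ ‖y'‖ := by
    have := norm_le_pi_norm y' l
    rwa [Real.norm_eq_abs] at this
  have h3 : ‖(y - y') l‖ = |y l - y' l| := by
    rw [Pi.sub_apply, Real.norm_eq_abs]
  rw [h3]
  exact (abs_sub_le_max (h l)).trans (max_le_max h1 h2)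

lemma abs_add_le_max {a b : ℝ} (h : a * b ≤ 0) : |a + b| ≤ max |a| |b| := by
  have h2 : 0 ≤ a * -b := by nlinarith
  have h3 := abs_sub_le_max h2
  rw [sub_neg_eq_add, abs_neg] at h3
  exact h3

lemma norm_add_le_max {n : ℕ} {y y' : Fin n → ℝ} (h : ∀ l, y l * y' l ≤ 0) :
    ‖y + y'‖ ≤ max ‖y‖ ‖y'‖ := by
  have h0 : 0 ≤ max ‖y‖ ‖y'‖ := le_max_of_le_left (norm_nonneg _)
  rw [pi_norm_le_iff_of_nonneg h0]
  intro l
  have h1 : |y l| ≤ ‖y‖ := by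
    have := norm_le_pi_norm y l
    rwa [Real.norm_eq_abs] at this
  have h2 : |y' l| ≤ ‖y'‖ := by
    have := norm_le_pi_norm y' l
    rwa [Real.norm_eq_abs] at this
  have h3 : ‖(y + y') l‖ = |y l + y' l| := by
    rw [Pi.add_apply, Real.norm_eq_abs]
  rw [h3]
  exact (abs_add_le_max (h l)).trans (max_le_max h1 h2)

lemma same_sign_prod {a b : ℝ} (h : 0 ≤ a ↔ 0 ≤ b) : 0 ≤ a * b := by
  rcases lt_trichotomy a 0 with h1 | h1 | h1
  · have h2 : ¬(0 ≤ b) := fun hb => absurd (h.mpr hb) (not_le.2 h1)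
    push_neg at h2
    exact le_of_lt (mul_pos_of_neg_of_neg h1 h2)
  · rw [h1, zero_mul]
  · exact mul_nonneg h1.le (h.mp h1.le)

/-- The central pairwise contradiction. -/
lemma key_pair (hM : M.det = 1) {s : ℝ} (hs0 : 0 < s) (hs1 : s < 1)
    {w w' : Fin (d + 1) → ℤ} {t t' : ℝ}
    (ht0 : 0 < t) (ht1 : t < 1) (ht0' : 0 < t') (ht1' : t' < 1)
    (hv : vpart (latPoint M w) ≠ 0) (hv' : vpart (latPoint M w') ≠ 0)
    (hlt : ‖vpart (latPoint M w)‖ < Fval d M s)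
    (hlt' : ‖vpart (latPoint M w')‖ < Fval d M s)
    (hne : ‖vpart (latPoint M w)‖ ≠ ‖vpart (latPoint M w')‖)
    (hw1 : -t < latPoint M w 0) (hw2 : latPoint M w 0 < 1 - t)
    (hw1' : -t' < latPoint M w' 0) (hw2' : latPoint M w' 0 < 1 - t')
    (hee : (fun l => decide (0 ≤ (if 0 < latPoint M w 0 then (1:ℝ) else -1) *
              vpart (latPoint M w) l))
         = (fun l => decide (0 ≤ (if 0 < latPoint M w' 0 then (1:ℝ) else -1) *
              vpart (latPoint M w') l))) : False := by
  have hm : 1 / 2 ≤ max s (1 - s) := by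
    rcases le_total s (1 / 2) with h | h
    · exact le_max_of_le_right (by linarith)
    · exact le_max_of_le_left h
  set m : ℝ := max s (1 - s) with hmdef
  have hfar1 : m ≤ |latPoint M w 0| := far hs0 hs1 hv hlt
  have hfar2 : m ≤ |latPoint M w' 0| := far hs0 hs1 hv' hlt'
  have hu1 : -1 < latPoint M w 0 := by linarith
  have hu2 : latPoint M w 0 < 1 := by linarith
  have hu1' : -1 < latPoint M w' 0 := by linarith
  have hu2' : latPoint M w' 0 < 1 := by linarith
  have hiff : ∀ l, (0 ≤ (if 0 < latPoint M w 0 then (1:ℝ) else -1) * vpart (latPoint M w) l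
      ↔ 0 ≤ (if 0 < latPoint M w' 0 then (1:ℝ) else -1) * vpart (latPoint M w') l) := by
    intro l
    have := congrFun hee l
    exact decide_eq_decide.mp this
  by_cases hσ : 0 < latPoint M w 0 <;> by_cases hσ' : 0 < latPoint M w' 0
  · -- both right side
    have hum : m ≤ latPoint M w 0 := by rwa [abs_of_pos hσ] at hfar1
    have hum' : m ≤ latPoint M w' 0 := by rwa [abs_of_pos hσ'] at hfar2
    have hprod : ∀ l, 0 ≤ vpart (latPoint M w) l * vpart (latPoint M w') l := by
      intro l
      have h := hiff l
      rw [if_pos hσ, if_pos hσ', one_mul, one_mul] at h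
      exact same_sign_prod h
    have hvd : vpart (latPoint M (w - w')) ≠ 0 := by
      rw [latPoint_sub, vpart_sub]
      refine sub_ne_zero.2 fun h => hne ?_
      rw [h]
    have hnd : ‖vpart (latPoint M (w - w'))‖ < Fval d M s := by
      rw [latPoint_sub, vpart_sub]
      exact lt_of_le_of_lt (norm_sub_le_max hprod) (max_lt hlt hlt')
    have hfard := far hs0 hs1 hvd hnd
    rw [latPoint_sub, Pi.sub_apply] at hfard
    have habs : |latPoint M w 0 - latPoint M w' 0| < 1 - m :=
      abs_sub_lt_iff.mpr ⟨by linarith, by linarith⟩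
    have := hfard.trans_lt habs
    linarith
  · -- w right, w' left
    have hum : m ≤ latPoint M w 0 := by rwa [abs_of_pos hσ] at hfar1
    have hσn' : latPoint M w' 0 ≤ 0 := le_of_not_gt hσ'
    have hum' : latPoint M w' 0 ≤ -m := by
      rw [abs_of_nonpos hσn'] at hfar2; linarith
    have hprod : ∀ l, vpart (latPoint M w) l * vpart (latPoint M w') l ≤ 0 := by
      intro l
      have h := hiff l
      rw [if_pos hσ, if_neg hσ', one_mul, neg_one_mul] at h
      have h2 : 0 ≤ vpart (latPoint M w) l * -vpart (latPoint M w') l :=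
        same_sign_prod h
      nlinarith
    have hvd : vpart (latPoint M (w + w')) ≠ 0 := by
      rw [latPoint_add, vpart_add]
      intro h
      apply hne
      have h2 : vpart (latPoint M w) = -vpart (latPoint M w') :=
        eq_neg_of_add_eq_zero_left h
      rw [h2, norm_neg]
    have hnd : ‖vpart (latPoint M (w + w'))‖ < Fval d M s := by
      rw [latPoint_add, vpart_add]
      exact lt_of_le_of_lt (norm_add_le_max hprod) (max_lt hlt hlt')
    have hfard := far hs0 hs1 hvd hnd
    rw [latPoint_add, Pi.add_apply] at hfard
    have habs : |latPoint M w 0 + latPoint M w' 0| < 1 - m := by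
      rw [abs_lt]; constructor <;> linarith
    have := hfard.trans_lt habs
    linarith
  · -- w left, w' right
    have hσn : latPoint M w 0 ≤ 0 := le_of_not_gt hσ
    have hum : latPoint M w 0 ≤ -m := by
      rw [abs_of_nonpos hσn] at hfar1; linarith
    have hum' : m ≤ latPoint M w' 0 := by rwa [abs_of_pos hσ'] at hfar2
    have hprod : ∀ l, vpart (latPoint M w) l * vpart (latPoint M w') l ≤ 0 := by
      intro l
      have h := hiff l
      rw [if_neg hσ, if_pos hσ', one_mul, neg_one_mul] at h
      have h2 : 0 ≤ -vpart (latPoint M w) l * vpart (latPoint M w') l :=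
        same_sign_prod h
      nlinarith
    have hvd : vpart (latPoint M (w + w')) ≠ 0 := by
      rw [latPoint_add, vpart_add]
      intro h
      apply hne
      have h2 : vpart (latPoint M w) = -vpart (latPoint M w') :=
        eq_neg_of_add_eq_zero_left h
      rw [h2, norm_neg]
    have hnd : ‖vpart (latPoint M (w + w'))‖ < Fval d M s := by
      rw [latPoint_add, vpart_add]
      exact lt_of_le_of_lt (norm_add_le_max hprod) (max_lt hlt hlt')
    have hfard := far hs0 hs1 hvd hnd
    rw [latPoint_add, Pi.add_apply] at hfard
    have habs : |latPoint M w 0 + latPoint M w' 0| < 1 - m := by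
      rw [abs_lt]; constructor <;> linarith
    have := hfard.trans_lt habs
    linarith
  · -- both left side
    have hσn : latPoint M w 0 ≤ 0 := le_of_not_gt hσ
    have hσn' : latPoint M w' 0 ≤ 0 := le_of_not_gt hσ'
    have hum : latPoint M w 0 ≤ -m := by
      rw [abs_of_nonpos hσn] at hfar1; linarith
    have hum' : latPoint M w' 0 ≤ -m := by
      rw [abs_of_nonpos hσn'] at hfar2; linarith
    have hprod : ∀ l, 0 ≤ vpart (latPoint M w) l * vpart (latPoint M w') l := by
      intro l
      have h := hiff l
      rw [if_neg hσ, if_neg hσ', neg_one_mul, neg_one_mul] at h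
      have h2 : 0 ≤ -vpart (latPoint M w) l * -vpart (latPoint M w') l :=
        same_sign_prod (by constructor <;> intro hx <;> [exact h.mp hx; exact h.mpr hx])
      nlinarith
    have hvd : vpart (latPoint M (w - w')) ≠ 0 := by
      rw [latPoint_sub, vpart_sub]
      refine sub_ne_zero.2 fun h => hne ?_
      rw [h]
    have hnd : ‖vpart (latPoint M (w - w'))‖ < Fval d M s := by
      rw [latPoint_sub, vpart_sub]
      exact lt_of_le_of_lt (norm_sub_le_max hprod) (max_lt hlt hlt')
    have hfard := far hs0 hs1 hvd hnd
    rw [latPoint_sub, Pi.sub_apply] at hfard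
    have habs : |latPoint M w 0 - latPoint M w' 0| < 1 - m :=
      abs_sub_lt_iff.mpr ⟨by linarith, by linarith⟩
    have := hfard.trans_lt habs
    linarith

end FvalAux

open FvalAux in
/-- For every `d ≥ 1` and every `M ∈ SL(d+1, ℝ)`, the number of distinct values taken by
`F(M, t)` as `t` ranges over `(0, 1)` is at most `2^d + 1`. -/
theorem Fval_card_range_le (d : ℕ) (hd : 1 ≤ d)
    (M : Matrix (Fin (d + 1)) (Fin (d + 1)) ℝ) (hM : M.det = 1) :
    { r : ℝ | ∃ t : ℝ, 0 < t ∧ t < 1 ∧ r = Fval d M t }.Finite ∧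
    { r : ℝ | ∃ t : ℝ, 0 < t ∧ t < 1 ∧ r = Fval d M t }.ncard ≤ 2 ^ d + 1 := by
  classical
  set V : Set ℝ := { r : ℝ | ∃ t : ℝ, 0 < t ∧ t < 1 ∧ r = Fval d M t } with hVdef
  have hmemV : ∀ r ∈ V, ∃ t w, 0 < t ∧ t < 1 ∧ Fval d M t = r ∧
      vpart (latPoint M w) ≠ 0 ∧ ‖vpart (latPoint M w)‖ = r ∧
      -t < latPoint M w 0 ∧ latPoint M w 0 < 1 - t := by
    rintro r ⟨t, ht0, ht1, rfl⟩
    have hmem := Fval_mem hM ht0 ht1 (FSet_nonempty hM hd ht0 ht1)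
    obtain ⟨w, heq, hpos, h1, h2⟩ := hmem
    refine ⟨t, w, ht0, ht1, rfl, ?_, heq.symm, h1, h2⟩
    rw [heq] at hpos
    exact norm_pos_iff.mp hpos
  have hch : ∀ r : ℝ, ∃ t w, r ∈ V → (0 < t ∧ t < 1 ∧ Fval d M t = r ∧
      vpart (latPoint M w) ≠ 0 ∧ ‖vpart (latPoint M w)‖ = r ∧
      -t < latPoint M w 0 ∧ latPoint M w 0 < 1 - t) := by
    intro r
    by_cases h : r ∈ V
    · obtain ⟨t, w, hp⟩ := hmemV r h
      exact ⟨t, w, fun _ => hp⟩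
    · exact ⟨1 / 2, 0, fun hr => absurd hr h⟩
  choose tf wf hf using hch
  set ε : ℝ → Fin d → Bool := fun r l =>
    decide (0 ≤ (if 0 < latPoint M (wf r) 0 then (1:ℝ) else -1) *
      vpart (latPoint M (wf r)) l) with hεdef
  set V' : Set ℝ := {r | r ∈ V ∧ ∃ c ∈ V, r < c} with hV'def
  have key : ∀ r ∈ V', ∀ r' ∈ V', r < r' → ε r = ε r' → False := by
    rintro r ⟨hrV, -⟩ r' ⟨hr'V, c, hcV, hr'c⟩ hlt hee
    obtain ⟨ht0, ht1, hFt, hv, hn, hw1, hw2⟩ := hf r hrV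
    obtain ⟨ht0', ht1', hFt', hv', hn', hw1', hw2'⟩ := hf r' hr'V
    obtain ⟨hs0, hs1, hFs, -, -, -, -⟩ := hf c hcV
    refine key_pair hM hs0 hs1 ht0 ht1 ht0' ht1' hv hv' ?_ ?_ ?_ hw1 hw2 hw1' hw2' ?_
    · rw [hn, hFs]; exact lt_trans hlt hr'c
    · rw [hn', hFs]; exact hr'c
    · rw [hn, hn']; exact ne_of_lt hlt
    · exact hee
  have hinj : Set.InjOn ε V' := by
    intro a ha b hb hab
    by_contra hne
    rcases lt_trichotomy a b with h | h | h
    · exact key a ha b hb h hab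
    · exact hne h
    · exact key b hb a ha h hab.symm
  have hV'fin : V'.Finite := Set.Finite.of_finite_image (Set.toFinite _) hinj
  have hV'card : V'.ncard ≤ 2 ^ d := by
    have h := Set.ncard_le_ncard_of_injOn ε (fun a _ => Set.mem_univ (ε a)) hinj
      Set.finite_univ
    have huniv : (Set.univ : Set (Fin d → Bool)).ncard = 2 ^ d := by
      rw [Set.ncard_univ, Nat.card_eq_fintype_card]
      simp
    rwa [huniv] at h
  have hTsub : (V \ V').Subsingleton := by
    intro a ha b hb
    rcases lt_trichotomy a b with h | h | h
    · exact absurd (show a ∈ V' from ⟨ha.1, b, hb.1, h⟩) ha.2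
    · exact h
    · exact absurd (show b ∈ V' from ⟨hb.1, a, ha.1, h⟩) hb.2
  have hV'subV : V' ⊆ V := fun r hr => hr.1
  have hVeq : V' ∪ (V \ V') = V := Set.union_diff_cancel hV'subV
  have hTfin : (V \ V').Finite := hTsub.finite
  have hVfin : V.Finite := by
    rw [← hVeq]; exact hV'fin.union hTfin
  refine ⟨hVfin, ?_⟩
  have hTcard : (V \ V').ncard ≤ 1 := by
    rcases hTsub.eq_empty_or_singleton with h | ⟨x, h⟩
    · rw [h]; simp
    · rw [h]; simp
  calc V.ncard = (V' ∪ (V \ V')).ncard := by rw [hVeq]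
    _ ≤ V'.ncard + (V \ V').ncard := Set.ncard_union_le _ _
    _ ≤ 2 ^ d + 1 := add_le_add hV'card hTcard
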